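/- Let R be a UFD. A polynomial p(x_1,...,x_n) ∈ R[x_1,...,x_n] satisfies the property that p(x_1^{t_1},...,x_n^{t_n}) is irreducible for every choice of positive integers t_1,...,t_n if and only if p(x_1^k,...,x_n^k) is irreducible for every positive integer k. -/

import Mathlib

open MvPolynomial

noncomputable def scaleExp {n : ℕ} (s : Fin n → ℕ) (d : Fin n →₀ ℕ) : Fin n →₀ ℕ :=
  Finsupp.equivFunOnFinite.symm (fun i => d i * s i)

lemma scaleExp_apply {n : ℕ} (s : Fin n → ℕ) (d : Fin n →₀ ℕ) (i : Fin n) :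
    scaleExp s d i = d i * s i := rfl

lemma scaleExp_injective {n : ℕ} {s : Fin n → ℕ} (hs : ∀ i, 0 < s i) :
    Function.Injective (scaleExp s) := by
  intro d d' h
  ext i
  have := congrArg (fun f => f i) (congrArg (⇑) h)
  simp only [scaleExp_apply] at this
  exact Nat.eq_of_mul_eq_mul_right (hs i) this

lemma aeval_pow_eq_mapDomain {R : Type*} [CommRing R] {n : ℕ} (s : Fin n → ℕ)
    (q : MvPolynomial (Fin n) R) :
    aeval (fun i => (X i : MvPolynomial (Fin n) R) ^ s i) q
      = AddMonoidAlgebra.mapDomain (scaleExp s) q := by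
  induction q using MvPolynomial.induction_on' with
  | monomial d r =>
    have hm : AddMonoidAlgebra.mapDomain (scaleExp s) (monomial d r) = monomial (scaleExp s d) r := by
      rw [← single_eq_monomial, ← single_eq_monomial, AddMonoidAlgebra.mapDomain_single]
    rw [hm, aeval_monomial, monomial_eq]
    simp only [algebraMap_eq]
    congr 1
    rw [Finsupp.prod_fintype _ _ (fun i => pow_zero _),
      Finsupp.prod_fintype _ _ (fun i => pow_zero _)]
    refine Finset.prod_congr rfl fun i _ => ?_
    rw [scaleExp_apply, ← pow_mul, mul_comm (s i)]
  | add f g hf hg =>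
    rw [map_add, hf, hg, ← AddMonoidAlgebra.mapDomain_add]

lemma aeval_pow_injective {R : Type*} [CommRing R] {n : ℕ} {s : Fin n → ℕ}
    (hs : ∀ i, 0 < s i) :
    Function.Injective (aeval (fun i => (X i : MvPolynomial (Fin n) R) ^ s i)
      : MvPolynomial (Fin n) R → MvPolynomial (Fin n) R) := by
  intro a b h
  rw [aeval_pow_eq_mapDomain, aeval_pow_eq_mapDomain] at h
  exact AddMonoidAlgebra.mapDomain_injective (scaleExp_injective hs) h

/-- Units of a multivariate polynomial ring over a domain are constants. -/
lemma isUnit_eq_C {R : Type*} [CommRing R] [IsDomain R] {n : ℕ}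
    {q : MvPolynomial (Fin n) R} (h : IsUnit q) :
    ∃ r : R, IsUnit r ∧ q = C r := by
  obtain ⟨v, hv⟩ := h.exists_right_inv
  have hq : q ≠ 0 := by rintro rfl; simp at hv
  have hv0 : v ≠ 0 := by rintro rfl; simp at hv
  set D : (Fin n →₀ ℕ) → Lex (Fin n →₀ ℕ) := ⇑toLex with hDdef
  have hD : Function.Injective D := toLex.injective
  have hadd : ∀ a b : (Fin n →₀ ℕ), D (a + b) = D a + D b := fun _ _ => rfl
  have hlc : AddMonoidAlgebra.leadingCoeff D q * AddMonoidAlgebra.leadingCoeff D v ≠ 0 :=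
    mul_ne_zero ((AddMonoidAlgebra.leadingCoeff_ne_zero hD).2 hq)
      ((AddMonoidAlgebra.leadingCoeff_ne_zero hD).2 hv0)
  have hmul : AddMonoidAlgebra.supDegree D (q * v)
      = AddMonoidAlgebra.supDegree D q + AddMonoidAlgebra.supDegree D v :=
    AddMonoidAlgebra.supDegree_mul hD hadd hlc hq hv0
  have hone : AddMonoidAlgebra.supDegree D (1 : MvPolynomial (Fin n) R) = 0 := by
    rw [AddMonoidAlgebra.one_def, AddMonoidAlgebra.supDegree_single]
    simp [hDdef]
  rw [hv, hone] at hmul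
  have hq0 : AddMonoidAlgebra.supDegree D q = 0 := by
    have h2 : (0 : Lex (Fin n →₀ ℕ)) ≤ AddMonoidAlgebra.supDegree D v := bot_le
    have hle : AddMonoidAlgebra.supDegree D q ≤ 0 := by
      calc AddMonoidAlgebra.supDegree D q
          ≤ AddMonoidAlgebra.supDegree D q + AddMonoidAlgebra.supDegree D v :=
            le_add_of_nonneg_right h2
        _ = 0 := hmul.symm
    exact le_antisymm hle bot_le
  have hsupp : q.support ⊆ {0} := by
    intro d hd
    have h1 : D d ≤ AddMonoidAlgebra.supDegree D q := Finset.le_sup hd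
    rw [hq0] at h1
    have h0 : (0 : Lex (Fin n →₀ ℕ)) ≤ D d := bot_le
    have : D d = 0 := le_antisymm h1 h0
    exact Finset.mem_singleton.mpr (hD this)
  refine ⟨constantCoeff q, h.map constantCoeff, ?_⟩
  have := Finsupp.support_subset_singleton.mp hsupp
  rw [C_apply, ← single_eq_monomial]
  exact AddMonoidAlgebra.ext this

/-- If the substitution `xᵢ ↦ xᵢ^{sᵢ}` of `b` is a unit, then `b` is a unit. -/
lemma isUnit_of_aeval_pow {R : Type*} [CommRing R] [IsDomain R] {n : ℕ} {s : Fin n → ℕ}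
    (hs : ∀ i, 0 < s i) {b : MvPolynomial (Fin n) R}
    (h : IsUnit (aeval (fun i => (X i : MvPolynomial (Fin n) R) ^ s i) b)) : IsUnit b := by
  obtain ⟨r, hr, hC⟩ := isUnit_eq_C h
  have : aeval (fun i => (X i : MvPolynomial (Fin n) R) ^ s i) b
      = aeval (fun i => (X i : MvPolynomial (Fin n) R) ^ s i) (C r) := by
    rw [hC, aeval_C, algebraMap_eq]
  have hb : b = C r := aeval_pow_injective hs this
  rw [hb]
  exact hr.map C

/-- Over a UFD `R`, a polynomial `p ∈ R[x₁,…,xₙ]` has the property that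
`p(x₁^{t₁},…,xₙ^{tₙ})` is irreducible for every choice of positive integers `tᵢ` if and
only if `p(x₁^k,…,xₙ^k)` is irreducible for every positive integer `k`. -/
theorem stmt1 {R : Type*} [CommRing R] [IsDomain R] [UniqueFactorizationMonoid R] {n : ℕ}
    (p : MvPolynomial (Fin n) R) :
    (∀ t : Fin n → ℕ, (∀ i, 0 < t i) →
        Irreducible (aeval (fun i => (X i : MvPolynomial (Fin n) R) ^ t i) p)) ↔
      (∀ k : ℕ, 0 < k →
        Irreducible (aeval (fun i => (X i : MvPolynomial (Fin n) R) ^ k) p)) := by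
  constructor
  · intro h k hk
    exact h (fun _ => k) (fun _ => hk)
  · intro h t ht
    set L : ℕ := ∏ i, t i with hLdef
    have hL : 0 < L := Finset.prod_pos (fun i _ => ht i)
    set s : Fin n → ℕ := fun i => L / t i with hsdef
    have hdvd : ∀ i, t i ∣ L := fun i => Finset.dvd_prod_of_mem t (Finset.mem_univ i)
    have hts : ∀ i, t i * s i = L := fun i => Nat.mul_div_cancel' (hdvd i)
    have hs : ∀ i, 0 < s i := fun i =>
      Nat.div_pos (Nat.le_of_dvd hL (hdvd i)) (ht i)
    set φ : MvPolynomial (Fin n) R →ₐ[R] MvPolynomial (Fin n) R :=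
      aeval (fun i => (X i : MvPolynomial (Fin n) R) ^ s i) with hφdef
    have hkey : φ (aeval (fun i => (X i : MvPolynomial (Fin n) R) ^ t i) p)
        = aeval (fun i => (X i : MvPolynomial (Fin n) R) ^ L) p := by
      rw [hφdef, ← AlgHom.comp_apply, comp_aeval]
      have he : (fun i => aeval (fun j => (X j : MvPolynomial (Fin n) R) ^ s j)
          ((X i : MvPolynomial (Fin n) R) ^ t i))
          = fun i => (X i : MvPolynomial (Fin n) R) ^ L := by
        funext i
        rw [map_pow, aeval_X, ← pow_mul, mul_comm, hts i]
      rw [he]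
    have hirr := h L hL
    constructor
    · intro hu
      exact hirr.not_isUnit (hkey ▸ hu.map φ)
    · intro b c hbc
      have : aeval (fun i => (X i : MvPolynomial (Fin n) R) ^ L) p = φ b * φ c := by
        rw [← hkey, hbc, map_mul]
      rcases hirr.isUnit_or_isUnit this with hu | hu
      · exact Or.inl (isUnit_of_aeval_pow hs hu)
      · exact Or.inr (isUnit_of_aeval_pow hs hu)
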